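/- arXiv:1103.1423 — 2 statements merged into one kernel-verified Lean document; each statement's English description precedes it below -/
import Mathlib

section
/- Let Γ be a finite connected graph (metric graph) with first Betti number β_Γ, let f be a function on Γ which is nonzero on the vertices of Γ and has finitely many isolated zeros, let P = P(f) be its zero set, μ(f) = |P| the number of zeros, ν(f) the number of nodal domains, and β_{Γ\P} the first Betti number of the graph Γ cut at the points of P. Then ν(f) = μ(f) + 1 − (β_Γ − β_{Γ\P}); in particular μ(f) − β_Γ + 1 ≤ ν(f) ≤ μ(f) + 1. -/
/-!
# Quantum graphs, partitions and the energy functional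

This file sets up a formalization of quantum graphs (finite metric graphs equipped with a
Schrödinger operator `f ↦ -f'' + q f` with bounded piecewise continuous potential and
extended δ-type vertex conditions), their eigenvalues (counted with multiplicity),
partitions by interior points, the graphs obtained by cutting at a partition,
the energy functional `Λ`, equipartitions, and the Robin ("section point") cutting
construction underlying the map `Φ_m` of Band–Berkolaiko–Raz–Smilansky.
-/

open scoped Classical ENNReal Real
open Set

noncomputable section

/-- A **quantum graph**: a finite metric graph `(V, E)` together with edge lengths,
a bounded piecewise continuous potential on each edge, and extended δ-type vertex
conditions with coefficients `α v ∈ ℝ ∪ {∞}` (`none` denotes `∞`, i.e. the Dirichlet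
condition).  Each edge `e` is identified with the segment `[0, L e]`, running from
the vertex `s e` to the vertex `t e`. -/
structure QuantumGraph where
  /-- vertices -/
  V : Type
  /-- edges -/
  E : Type
  instV : Fintype V
  instE : Fintype E
  /-- initial vertex of an edge -/
  s : E → V
  /-- terminal vertex of an edge -/
  t : E → V
  /-- edge lengths -/
  L : E → ℝ
  L_pos : ∀ e, 0 < L e
  /-- the potential on each edge -/
  q : E → ℝ → ℝ
  /-- the potential is bounded on each edge -/
  q_bdd : ∀ e, ∃ M : ℝ, ∀ x ∈ Set.Icc (0 : ℝ) (L e), |q e x| ≤ M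
  /-- the potential is piecewise continuous on each edge -/
  q_pc : ∀ e, ∃ S : Finset ℝ, ContinuousOn (q e) (Set.Icc (0 : ℝ) (L e) \ (S : Set ℝ))
  /-- coefficients of the δ-type vertex conditions; `none` means Dirichlet -/
  α : V → Option ℝ

attribute [instance] QuantumGraph.instV QuantumGraph.instE

namespace QuantumGraph

variable (Γ : QuantumGraph)

/-- The "ends" of edges: `(e, false)` is the end of `e` at `s e` (coordinate `0`),
`(e, true)` is the end at `t e` (coordinate `L e`). `endV` gives the vertex of an end. -/
def endV (a : Γ.E × Bool) : Γ.V := if a.2 then Γ.t a.1 else Γ.s a.1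

/-- Value of an edgewise function at an end of an edge. -/
def endVal (f : Γ.E → ℝ → ℝ) (a : Γ.E × Bool) : ℝ :=
  if a.2 then f a.1 (Γ.L a.1) else f a.1 0

/-- Derivative of an edgewise function at an end of an edge, taken *into* the edge. -/
def endDeriv (f' : Γ.E → ℝ → ℝ) (a : Γ.E × Bool) : ℝ :=
  if a.2 then -(f' a.1 (Γ.L a.1)) else f' a.1 0

/-- The sum of the derivatives (into the edges) over all ends meeting a vertex `v`. -/
def derivSumAt (f' : Γ.E → ℝ → ℝ) (v : Γ.V) : ℝ :=
  ∑ a : Γ.E × Bool, if Γ.endV a = v then Γ.endDeriv f' a else 0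

/-- The degree of a vertex: the number of ends of edges meeting it. -/
def degree (v : Γ.V) : ℕ :=
  ∑ a : Γ.E × Bool, if Γ.endV a = v then 1 else 0

/-- `Γ.IsEigenfunPair lam f f'` asserts that `f` (with edgewise derivative `f'`) is an
eigenfunction of the Schrödinger operator `g ↦ -g'' + q g` on `Γ` with eigenvalue `lam`:
on each edge `f` is differentiable with continuous derivative `f'`, the eigenvalue equation
`f'' = (q - lam) f` holds away from the (finitely many) discontinuities of the potential,
`f` is continuous at the vertices, and the extended δ-type vertex conditions hold.
(For definiteness, `f` is normalized to vanish outside the segments `[0, L e]`.) -/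
structure IsEigenfunPair (lam : ℝ) (f f' : Γ.E → ℝ → ℝ) : Prop where
  support : ∀ e x, x ∉ Set.Icc (0 : ℝ) (Γ.L e) → f e x = 0
  hasDeriv : ∀ e, ∀ x ∈ Set.Icc (0 : ℝ) (Γ.L e),
    HasDerivWithinAt (f e) (f' e x) (Set.Icc (0 : ℝ) (Γ.L e)) x
  contDeriv : ∀ e, ContinuousOn (f' e) (Set.Icc (0 : ℝ) (Γ.L e))
  ode : ∀ e, ∃ S : Finset ℝ, ∀ x ∈ Set.Icc (0 : ℝ) (Γ.L e) \ (S : Set ℝ),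
    HasDerivWithinAt (f' e) ((Γ.q e x - lam) * f e x) (Set.Icc (0 : ℝ) (Γ.L e)) x
  contVert : ∀ a b, Γ.endV a = Γ.endV b → Γ.endVal f a = Γ.endVal f b
  delta : ∀ (v : Γ.V) (c : ℝ) (a : Γ.E × Bool), Γ.α v = some c → Γ.endV a = v →
    Γ.derivSumAt f' v = c * Γ.endVal f a
  dirich : ∀ (v : Γ.V) (a : Γ.E × Bool), Γ.α v = none → Γ.endV a = v → Γ.endVal f a = 0
  nontrivial : ∃ e, ∃ x ∈ Set.Icc (0 : ℝ) (Γ.L e), f e x ≠ 0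

/-- `f` is an eigenfunction of `Γ` with eigenvalue `lam`. -/
def IsEigenfun (lam : ℝ) (f : Γ.E → ℝ → ℝ) : Prop := ∃ f', Γ.IsEigenfunPair lam f f'

/-- `lam` is an eigenvalue of (the Schrödinger operator on) `Γ`. -/
def IsEigenvalue (lam : ℝ) : Prop := ∃ f, Γ.IsEigenfun lam f

/-- The multiplicity of `lam` as an eigenvalue of `Γ`: the dimension of the span of the
eigenfunctions with eigenvalue `lam`. -/
def eigMult (lam : ℝ) : ℕ :=
  Cardinal.toNat (Module.rank ℝ
    (Submodule.span ℝ {f : Γ.E → ℝ → ℝ | Γ.IsEigenfun lam f}))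

/-- `lam` is a simple eigenvalue of `Γ`. -/
def IsSimpleEigenvalue (lam : ℝ) : Prop := Γ.IsEigenvalue lam ∧ Γ.eigMult lam = 1

/-- The eigenvalue counting function: the number (with multiplicity) of eigenvalues `≤ μ`. -/
def eigCount (μ : ℝ) : ℝ≥0∞ :=
  ∑' ν : {ν : ℝ // Γ.IsEigenvalue ν ∧ ν ≤ μ}, (Γ.eigMult ν : ℝ≥0∞)

/-- The `n`-th eigenvalue of `Γ` (eigenvalues numbered in ascending order with
multiplicity, starting from `n = 1`):  `λ_n = inf {μ | N(μ) ≥ n}` where `N` is the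
counting function. -/
def evalue (n : ℕ) : ℝ := sInf {μ : ℝ | (n : ℝ≥0∞) ≤ Γ.eigCount μ}

/-- Combinatorial adjacency of vertices. -/
def adj (v w : Γ.V) : Prop :=
  ∃ e, (Γ.s e = v ∧ Γ.t e = w) ∨ (Γ.s e = w ∧ Γ.t e = v)

/-- The setoid on the vertices generated by adjacency. -/
def compSetoid : Setoid Γ.V := Relation.EqvGen.setoid Γ.adj

/-- The connected components of `Γ`. -/
def Components : Type := Quotient Γ.compSetoid

/-- The connected component of a vertex. -/
def compOf (v : Γ.V) : Γ.Components := Quotient.mk Γ.compSetoid v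

/-- The number of connected components of `Γ`. -/
def numComponents : ℕ := Nat.card Γ.Components

/-- The first Betti number `β = |E| - |V| + (number of components)`. -/
def betti : ℤ := (Nat.card Γ.E : ℤ) - (Nat.card Γ.V : ℤ) + (Γ.numComponents : ℤ)

/-- `Γ` is connected (and nonempty). -/
def Connected : Prop := Γ.numComponents = 1

/-- The quantum subgraph given by a connected component of `Γ` (with the conditions
inherited from `Γ`). -/
def comp (c : Γ.Components) : QuantumGraph where
  V := {v : Γ.V // Γ.compOf v = c}
  E := {e : Γ.E // Γ.compOf (Γ.s e) = c}
  instV := Fintype.ofFinite _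
  instE := Fintype.ofFinite _
  s e := ⟨Γ.s e.1, e.2⟩
  t e := ⟨Γ.t e.1, by
    have h : Γ.compOf (Γ.s e.1) = Γ.compOf (Γ.t e.1) :=
      Quotient.sound (Relation.EqvGen.rel _ _ ⟨e.1, Or.inl ⟨rfl, rfl⟩⟩)
    rw [← h]; exact e.2⟩
  L e := Γ.L e.1
  L_pos e := Γ.L_pos e.1
  q e := Γ.q e.1
  q_bdd e := Γ.q_bdd e.1
  q_pc e := Γ.q_pc e.1
  α v := Γ.α v.1

/-- `f` does not vanish at any vertex of `Γ` which does not carry the Dirichlet condition. -/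
def NonvanishingAtVertices (f : Γ.E → ℝ → ℝ) : Prop :=
  ∀ a : Γ.E × Bool, Γ.α (Γ.endV a) ≠ none → Γ.endVal f a ≠ 0

/-- A **(proper) partition** of a quantum graph `Γ`: a finite set of *partition vertices*
in the interiors of the edges, recorded, for each edge `e`, as a strictly increasing
list of `num e` points of the open interval `(0, L e)`. -/
structure Partition (Γ : QuantumGraph) where
  /-- the number of partition points on each edge -/
  num : Γ.E → ℕ
  /-- the partition points on each edge, in increasing order -/
  pts : ∀ e, Fin (num e) → ℝ
  mono : ∀ e, StrictMono (pts e)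
  lower : ∀ e i, 0 < pts e i
  upper : ∀ e i, pts e i < Γ.L e

namespace Partition

variable {Γ : QuantumGraph} (P : Partition Γ)

/-- The size (total number of partition points) of a partition. -/
def size : ℕ := ∑ e, P.num e

/-- The index type of the partition points of `P`. -/
abbrev ι : Type := (e : Γ.E) × Fin (P.num e)

/-- The subdivision boundaries on an edge `e`: `bnd e 0 = 0`,
`bnd e j = pts e (j-1)` for `1 ≤ j ≤ num e`, and `bnd e j = L e` for `j > num e`. -/
def bnd (e : Γ.E) (j : ℕ) : ℝ :=
  if h0 : j = 0 then 0
  else if h : j ≤ P.num e then P.pts e ⟨j - 1, by omega⟩ else Γ.L e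

lemma bnd_nonneg (e : Γ.E) (j : ℕ) : 0 ≤ P.bnd e j := by
  unfold bnd
  split_ifs with h0 h
  · exact le_rfl
  · exact (P.lower e _).le
  · exact (Γ.L_pos e).le

lemma bnd_le (e : Γ.E) (j : ℕ) : P.bnd e j ≤ Γ.L e := by
  unfold bnd
  split_ifs with h0 h
  · exact (Γ.L_pos e).le
  · exact (P.upper e _).le
  · exact le_rfl

lemma bnd_lt_succ (e : Γ.E) {j : ℕ} (hj : j ≤ P.num e) : P.bnd e j < P.bnd e (j + 1) := by
  unfold bnd
  have hj1 : ¬(j + 1 = 0) := by omega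
  rw [dif_neg hj1]
  by_cases h0 : j = 0
  · subst h0
    rw [dif_pos rfl]
    by_cases h1 : 0 + 1 ≤ P.num e
    · rw [dif_pos h1]; exact P.lower e _
    · rw [dif_neg h1]; exact Γ.L_pos e
  · rw [dif_neg h0, dif_pos hj]
    by_cases h2 : j + 1 ≤ P.num e
    · rw [dif_pos h2]
      exact P.mono e (by simp only [Fin.mk_lt_mk]; omega)
    · rw [dif_neg h2]; exact P.upper e _

/-- The quantum graph obtained by **cutting** `Γ` at the partition points of `P`.
Each partition point `p` is replaced by a pair of new vertices: `(p, false)` (denoted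
`v_p^-`, attached to the piece of the edge to the left of `p`) and `(p, true)`
(denoted `v_p^+`, attached to the piece to the right), carrying the δ-type coefficients
`am p`, resp. `ap p`. -/
def cut (am ap : P.ι → Option ℝ) : QuantumGraph where
  V := Γ.V ⊕ P.ι × Bool
  E := (e : Γ.E) × Fin (P.num e + 1)
  instV := inferInstance
  instE := inferInstance
  s := fun x => if h : x.2.val = 0 then Sum.inl (Γ.s x.1)
    else Sum.inr (⟨x.1, ⟨x.2.val - 1, by have := x.2.isLt; omega⟩⟩, true)
  t := fun x => if h : x.2.val = P.num x.1 then Sum.inl (Γ.t x.1)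
    else Sum.inr (⟨x.1, ⟨x.2.val, by have := x.2.isLt; omega⟩⟩, false)
  L := fun x => P.bnd x.1 (x.2.val + 1) - P.bnd x.1 x.2.val
  L_pos := fun x => by
    have h := P.bnd_lt_succ x.1 (j := x.2.val) (by have := x.2.isLt; omega)
    exact sub_pos.mpr h
  q := fun x y => Γ.q x.1 (P.bnd x.1 x.2.val + y)
  q_bdd := fun x => by
    obtain ⟨M, hM⟩ := Γ.q_bdd x.1
    refine ⟨M, fun y hy => ?_⟩
    have hy1 : (0 : ℝ) ≤ y := hy.1
    have hy2 : y ≤ P.bnd x.1 (x.2.val + 1) - P.bnd x.1 x.2.val := hy.2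
    have hb0 := P.bnd_nonneg x.1 x.2.val
    have hbL := P.bnd_le x.1 (x.2.val + 1)
    exact hM _ ⟨by linarith, by linarith⟩
  q_pc := fun x => by
    obtain ⟨S, hS⟩ := Γ.q_pc x.1
    refine ⟨S.image (fun z => z - P.bnd x.1 x.2.val), ?_⟩
    have hc : Continuous (fun y : ℝ => P.bnd x.1 x.2.val + y) := by continuity
    refine ContinuousOn.comp hS hc.continuousOn ?_
    intro y hy
    have hy1 : (0 : ℝ) ≤ y := hy.1.1
    have hy2 : y ≤ P.bnd x.1 (x.2.val + 1) - P.bnd x.1 x.2.val := hy.1.2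
    have hb0 := P.bnd_nonneg x.1 x.2.val
    have hbL := P.bnd_le x.1 (x.2.val + 1)
    refine ⟨⟨by linarith, by linarith⟩, ?_⟩
    intro hmem
    apply hy.2
    simp only [Finset.coe_image, Set.mem_image, Finset.mem_coe]
    exact ⟨_, Finset.mem_coe.mp hmem, by ring⟩
  α := fun v => match v with
    | Sum.inl w => Γ.α w
    | Sum.inr (p, b) => if b then ap p else am p

/-- Cutting `Γ` at `P` with Dirichlet conditions at all new vertices: the graph `Γ \ P`. -/
def cutD : QuantumGraph := P.cut (fun _ => none) (fun _ => none)

/-- The **energy functional** `Λ(P) = max_j λ_1(Γ_j)`, the maximum of the groundstate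
energies of the subgraphs (connected components) of the partition. -/
def energy : ℝ := ⨆ c : P.cutD.Components, (P.cutD.comp c).evalue 1

/-- `P` is an **equipartition**: all its subgraphs share the same groundstate energy. -/
def IsEquipartition : Prop :=
  ∀ c c' : P.cutD.Components, (P.cutD.comp c).evalue 1 = (P.cutD.comp c').evalue 1

/-- The number of subgraphs (connected components) of the partition `P`; for the
partition given by the zero set of a function this is its number of nodal domains. -/
def nodalCount : ℕ := P.cutD.numComponents

/-- `P` is **bipartite**: its subgraphs can be labeled with signs so that the two
subgraphs meeting at any partition point carry different signs. -/
def IsBipartite : Prop :=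
  ∃ g : P.cutD.Components → Bool,
    ∀ p : P.ι, g (P.cutD.compOf (Sum.inr (p, false))) ≠ g (P.cutD.compOf (Sum.inr (p, true)))

/-- The δ-type (Robin) coefficient `tan (θ/2)`, with the Dirichlet condition when
`cos (θ/2) = 0`. -/
def robinAlpha (θ : ℝ) : Option ℝ :=
  if Real.cos (θ / 2) = 0 then none else some (Real.tan (θ / 2))

/-- Cutting `Γ` at the *section points* of `S` with the Robin conditions
`cos (φ_i/2) f'(v_i^-) = - sin (φ_i/2) f(v_i^-)`, `cos (φ_i/2) f'(v_i^+) = sin (φ_i/2) f(v_i^+)`,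
i.e. δ-type coefficients `α(v_i^-) = -tan (φ_i/2)`, `α(v_i^+) = tan (φ_i/2)`:
the graph `Γ_{φ_1, …, φ_β}`. -/
def cutRobin (φ : P.ι → ℝ) : QuantumGraph :=
  P.cut (fun p => (robinAlpha (φ p)).map (fun a => -a)) (fun p => robinAlpha (φ p))

/-- `S` is a valid set of *section points*: cutting `Γ` at `S` leaves a connected graph
with no cycles (a tree). -/
def IsSection : Prop := P.cutD.numComponents = 1 ∧ P.cutD.betti = 0

end Partition

/-- The partition `P` **corresponds** to the function `f` on `Γ`: `f` vanishes exactly at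
the partition points of `P` (in particular `f` is nonzero at the vertices of `Γ`). -/
def Corresponds (f : Γ.E → ℝ → ℝ) (P : Partition Γ) : Prop :=
  ∀ e x, x ∈ Set.Icc (0 : ℝ) (Γ.L e) → (f e x = 0 ↔ ∃ i, P.pts e i = x)

/-- The defining relation of the map `Φ_m`: `Q = Φ_m(φ)` iff the `(m+1)`-st eigenvalue of
the cut graph `Γ_φ` has an eigenfunction `f` which is nonzero at all non-Dirichlet
vertices of `Γ_φ`, and the partition points of `Q`, viewed on `Γ`, are exactly the zeros
of `f` (in the interiors of the edges of `Γ_φ`). -/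
def PhiRel {Γ : QuantumGraph} (S : Partition Γ) (m : ℕ) (φ : S.ι → ℝ) (Q : Partition Γ) :
    Prop :=
  ∃ f, (S.cutRobin φ).IsEigenfun ((S.cutRobin φ).evalue (m + 1)) f ∧
    (S.cutRobin φ).NonvanishingAtVertices f ∧
    ∀ (e : Γ.E) (y : ℝ), 0 < y → y < Γ.L e →
      ((∃ j, Q.pts e j = y) ↔ ∃ (i : Fin (S.num e + 1)) (x : ℝ),
        0 < x ∧ x < (S.cutRobin φ).L ⟨e, i⟩ ∧ S.bnd e i + x = y ∧ f ⟨e, i⟩ x = 0)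

/-- A single edge `e` of `Γ`, as a quantum graph with Dirichlet conditions at both
endpoints. -/
def edgeGraph (e : Γ.E) : QuantumGraph where
  V := Bool
  E := Unit
  instV := inferInstance
  instE := inferInstance
  s _ := false
  t _ := true
  L _ := Γ.L e
  L_pos _ := Γ.L_pos e
  q _ := Γ.q e
  q_bdd _ := Γ.q_bdd e
  q_pc _ := Γ.q_pc e
  α _ := none

/-- `λ_D = max_e λ_e`, the maximum over the edges of `Γ` of the groundstate energy of the
edge with Dirichlet conditions at both endpoints. -/
def dirichletMax : ℝ := ⨆ e : Γ.E, (Γ.edgeGraph e).evalue 1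

/-- The fundamental domain `(-π, π]^ι` of the torus `𝕋^ι`. -/
def fundamental (ι : Type) : Set (ι → ℝ) := {φ | ∀ j, φ j ∈ Set.Ioc (-π) π}

/-- A set of parameter vectors is `2π`-periodic in every coordinate (i.e. it descends to
the torus `𝕋^ι`). -/
def PeriodicSet {ι : Type} (D : Set (ι → ℝ)) : Prop :=
  ∀ φ ∈ D, ∀ j, Function.update φ j (φ j + 2 * π) ∈ D ∧
    Function.update φ j (φ j - 2 * π) ∈ D

/-- A map of parameter vectors is `2π`-periodic in every coordinate (i.e. it descends to
the torus `𝕋^ι`). -/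
def PeriodicMap {ι α : Type} (Φ : (ι → ℝ) → α) : Prop :=
  ∀ (φ : ι → ℝ) (j : ι), Φ (Function.update φ j (φ j + 2 * π)) = Φ φ

end QuantumGraph

open QuantumGraph

lemma eqvGen_closure {X : Type*} {r R : X → X → Prop}
    (hR : Equivalence R) (h : ∀ a b, r a b → R a b) :
    ∀ a b, Relation.EqvGen r a b → R a b := by
  intro a b hab
  induction hab with
  | rel a b h' => exact h a b h'
  | refl a => exact hR.refl a
  | symm a b _ ih => exact hR.symm ih
  | trans a b c _ _ ih1 ih2 => exact hR.trans ih1 ih2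

lemma eqvGen_setoid_congr {X : Type*} {r q : X → X → Prop}
    (h1 : ∀ a b, r a b → Relation.EqvGen q a b)
    (h2 : ∀ a b, q a b → Relation.EqvGen r a b) :
    Relation.EqvGen.setoid r = Relation.EqvGen.setoid q := by
  apply Setoid.ext
  intro a b
  constructor
  · exact fun h => eqvGen_closure (Relation.EqvGen.is_equivalence q) h1 a b h
  · exact fun h => eqvGen_closure (Relation.EqvGen.is_equivalence r) h2 a b h

lemma card_quot_le_add_one {X : Type} [Finite X] (r : X → X → Prop) (a b : X) :
    Nat.card (Quotient (Relation.EqvGen.setoid r)) ≤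
    Nat.card (Quotient (Relation.EqvGen.setoid
      (fun x y => r x y ∨ (x = a ∧ y = b)))) + 1 := by
  set s : Setoid X := Relation.EqvGen.setoid r with hs
  set s' : Setoid X := Relation.EqvGen.setoid (fun x y => r x y ∨ (x = a ∧ y = b)) with hs'
  haveI : Finite (Quotient s') := Quotient.finite s'
  haveI := Fintype.ofFinite (Quotient s')
  set R : X → X → Prop := fun x y => Relation.EqvGen r x y ∨
    (Relation.EqvGen r x a ∧ Relation.EqvGen r b y) ∨
    (Relation.EqvGen r x b ∧ Relation.EqvGen r a y) with hRdef
  have hReq : Equivalence R := by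
    constructor
    · exact fun x => Or.inl (Relation.EqvGen.refl x)
    · rintro x y (h | ⟨h1, h2⟩ | ⟨h1, h2⟩)
      · exact Or.inl (h.symm _ _)
      · exact Or.inr (Or.inr ⟨h2.symm _ _, h1.symm _ _⟩)
      · exact Or.inr (Or.inl ⟨h2.symm _ _, h1.symm _ _⟩)
    · rintro x y z (h | ⟨h1, h2⟩ | ⟨h1, h2⟩) (g | ⟨g1, g2⟩ | ⟨g1, g2⟩)
      · exact Or.inl (h.trans _ _ _ g)
      · exact Or.inr (Or.inl ⟨h.trans _ _ _ g1, g2⟩)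
      · exact Or.inr (Or.inr ⟨h.trans _ _ _ g1, g2⟩)
      · exact Or.inr (Or.inl ⟨h1, h2.trans _ _ _ g⟩)
      · exact Or.inl (h1.trans _ _ _ (((g1.symm _ _).trans _ _ _ (h2.symm _ _)).trans _ _ _ g2))
      · exact Or.inl (h1.trans _ _ _ g2)
      · exact Or.inr (Or.inr ⟨h1, h2.trans _ _ _ g⟩)
      · exact Or.inl (h1.trans _ _ _ g2)
      · exact Or.inl (h1.trans _ _ _ (((h2.trans _ _ _ g1).symm _ _).trans _ _ _ g2))
  have hkey : ∀ x y : X, s'.r x y → R x y := by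
    intro x y hxy
    refine eqvGen_closure hReq ?_ x y hxy
    rintro u v (huv | ⟨rfl, rfl⟩)
    · exact Or.inl (Relation.EqvGen.rel _ _ huv)
    · exact Or.inr (Or.inl ⟨Relation.EqvGen.refl _, Relation.EqvGen.refl _⟩)
  have hle : ∀ x y : X, s.r x y → s'.r x y := by
    intro x y hxy
    exact Relation.EqvGen.mono (fun u v huv => Or.inl huv) _ _ hxy
  let g : Quotient s → Quotient s' :=
    Quotient.lift (fun x => (Quotient.mk s' x)) (fun x y hxy => Quotient.sound (hle x y hxy))
  let h : Quotient s → Option (Quotient s') :=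
    fun q => if q = Quotient.mk s b then none else some (g q)
  have hinj : Function.Injective h := by
    intro q1 q2 hq
    by_cases e1 : q1 = Quotient.mk s b <;> by_cases e2 : q2 = Quotient.mk s b
    · exact e1.trans e2.symm
    · rw [show h q1 = none from if_pos e1, show h q2 = some (g q2) from if_neg e2] at hq
      exact absurd hq (by simp)
    · rw [show h q1 = some (g q1) from if_neg e1, show h q2 = none from if_pos e2] at hq
      exact absurd hq (by simp)
    · rw [show h q1 = some (g q1) from if_neg e1, show h q2 = some (g q2) from if_neg e2] at hq
      have hgq : g q1 = g q2 := Option.some.inj hq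
      obtain ⟨x, rfl⟩ := Quotient.exists_rep q1
      obtain ⟨y, rfl⟩ := Quotient.exists_rep q2
      have hxy : s'.r x y := Quotient.exact (by simpa [g] using hgq)
      rcases hkey x y hxy with hc | ⟨h1, h2⟩ | ⟨h1, h2⟩
      · exact Quotient.sound hc
      · exact absurd (Quotient.sound (h2.symm _ _) : Quotient.mk s y = Quotient.mk s b) e2
      · exact absurd (Quotient.sound h1 : Quotient.mk s x = Quotient.mk s b) e1
  calc Nat.card (Quotient s) ≤ Nat.card (Option (Quotient s')) :=
        Nat.card_le_card_of_injective h hinj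
    _ = Nat.card (Quotient s') + 1 := by
        simp [Nat.card_eq_fintype_card]

lemma card_le_quot_pairs_fin {X : Type} [Finite X] :
    ∀ (n : ℕ) (p : Fin n → X × X),
    Nat.card X ≤ Nat.card (Quotient (Relation.EqvGen.setoid
      (fun x y => ∃ j, p j = (x, y)))) + n := by
  intro n
  induction n with
  | zero =>
    intro p
    have hinj : Function.Injective
        (Quotient.mk (Relation.EqvGen.setoid (fun x y => ∃ j, p j = (x, y)))) := by
      intro x y hxy
      have := Quotient.exact hxy
      refine eqvGen_closure ⟨fun _ => rfl, fun h => h.symm, fun h g => h.trans g⟩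
        ?_ x y this
      rintro u v ⟨j, -⟩
      exact absurd j.2 (by omega)
    simpa using Nat.card_le_card_of_injective _ hinj
  | succ n ih =>
    intro p
    set a := (p (Fin.last n)).1
    set b := (p (Fin.last n)).2
    have h1 := ih (fun j => p j.castSucc)
    have h2 := card_quot_le_add_one (fun x y => ∃ j : Fin n, p j.castSucc = (x, y)) a b
    have h3 : Relation.EqvGen.setoid
        (fun x y => (∃ j : Fin n, p j.castSucc = (x, y)) ∨ (x = a ∧ y = b)) =
        Relation.EqvGen.setoid (fun x y => ∃ j : Fin (n+1), p j = (x, y)) := by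
      apply eqvGen_setoid_congr
      · rintro x y (⟨j, hj⟩ | ⟨rfl, rfl⟩)
        · exact Relation.EqvGen.rel _ _ ⟨j.castSucc, hj⟩
        · exact Relation.EqvGen.rel _ _ ⟨Fin.last n, rfl⟩
      · rintro x y ⟨j, hj⟩
        rcases Fin.eq_castSucc_or_eq_last j with ⟨i, rfl⟩ | rfl
        · exact Relation.EqvGen.rel _ _ (Or.inl ⟨i, hj⟩)
        · exact Relation.EqvGen.rel _ _ (Or.inr ⟨by simp [a, hj], by simp [b, hj]⟩)
    rw [h3] at h2
    omega

lemma card_le_quot_pairs {X J : Type} [Finite X] [Finite J] (p : J → X × X) :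
    Nat.card X ≤ Nat.card (Quotient (Relation.EqvGen.setoid
      (fun x y => ∃ j, p j = (x, y)))) + Nat.card J := by
  obtain ⟨n, ⟨e⟩⟩ := Finite.exists_equiv_fin J
  have h1 := card_le_quot_pairs_fin n (fun i => p (e.symm i))
  have h3 : Relation.EqvGen.setoid (fun x y => ∃ i : Fin n, p (e.symm i) = (x, y)) =
      Relation.EqvGen.setoid (fun x y => ∃ j : J, p j = (x, y)) := by
    apply eqvGen_setoid_congr
    · rintro x y ⟨i, hi⟩; exact Relation.EqvGen.rel _ _ ⟨e.symm i, hi⟩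
    · rintro x y ⟨j, hj⟩; exact Relation.EqvGen.rel _ _ ⟨e j, by simpa using hj⟩
  rw [h3] at h1
  have : Nat.card J = n := Nat.card_eq_of_equiv_fin e
  omega

lemma card_V_le_aux (Γ0 : QuantumGraph) :
    Nat.card Γ0.V ≤ Γ0.numComponents + Nat.card Γ0.E := by
  have h := card_le_quot_pairs (fun e : Γ0.E => (Γ0.s e, Γ0.t e))
  have h3 : Relation.EqvGen.setoid (fun x y => ∃ e, (Γ0.s e, Γ0.t e) = (x, y)) =
      Relation.EqvGen.setoid Γ0.adj := by
    apply eqvGen_setoid_congr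
    · rintro x y ⟨e, he⟩
      exact Relation.EqvGen.rel _ _ ⟨e, Or.inl ⟨congrArg Prod.fst he, congrArg Prod.snd he⟩⟩
    · rintro x y ⟨e, (⟨h1, h2⟩ | ⟨h1, h2⟩)⟩
      · exact Relation.EqvGen.rel _ _ ⟨e, by rw [h1, h2]⟩
      · exact (Relation.EqvGen.rel _ _ ⟨e, by rw [h1, h2]⟩).symm _ _
  rw [h3] at h
  exact h

lemma card_iota (Γ : QuantumGraph) (P : Partition Γ) : Nat.card P.ι = P.size := by
  simp [Nat.card_eq_fintype_card, Partition.size]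

lemma cut_components_le (Γ : QuantumGraph) (hconn : Γ.Connected) (P : Partition Γ) :
    P.cutD.numComponents ≤ P.size + 1 := by
  classical
  have hs0 : ∀ (e : Γ.E) (h : 0 < P.num e + 1),
      P.cutD.s ⟨e, ⟨0, h⟩⟩ = Sum.inl (Γ.s e) := by
    intro e h
    simp [Partition.cutD, Partition.cut]
  have hsi : ∀ (e : Γ.E) (i : ℕ) (h1 : i + 1 < P.num e + 1) (h2 : i < P.num e),
      P.cutD.s ⟨e, ⟨i + 1, h1⟩⟩ = Sum.inr (⟨e, ⟨i, h2⟩⟩, true) := by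
    intro e i h1 h2
    simp [Partition.cutD, Partition.cut]
  have htn : ∀ (e : Γ.E) (h : P.num e < P.num e + 1),
      P.cutD.t ⟨e, ⟨P.num e, h⟩⟩ = Sum.inl (Γ.t e) := by
    intro e h
    simp [Partition.cutD, Partition.cut]
  have hti : ∀ (e : Γ.E) (i : ℕ) (h1 : i < P.num e + 1) (h2 : i < P.num e),
      P.cutD.t ⟨e, ⟨i, h1⟩⟩ = Sum.inr (⟨e, ⟨i, h2⟩⟩, false) := by
    intro e i h1 h2
    simp [Partition.cutD, Partition.cut, show i ≠ P.num e from by omega]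
  let X := P.cutD.Components
  haveI : Finite X := Quotient.finite _
  let p : P.ι → X × X := fun j =>
    (P.cutD.compOf (Sum.inr (j, false)), P.cutD.compOf (Sum.inr (j, true)))
  have hmain := card_le_quot_pairs p
  set gs := Relation.EqvGen.setoid (fun x y : X => ∃ j, p j = (x, y)) with hgs
  let F : P.cutD.V → Quotient gs := fun v => Quotient.mk gs (P.cutD.compOf v)
  have hadj : ∀ v w : P.cutD.V, P.cutD.adj v w → F v = F w := by
    intro v w h
    exact congrArg (Quotient.mk gs) (Quotient.sound (Relation.EqvGen.rel _ _ h))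
  have hglue : ∀ j : P.ι, F (Sum.inr (j, false)) = F (Sum.inr (j, true)) :=
    fun j => Quotient.sound (Relation.EqvGen.rel _ _ ⟨j, rfl⟩)
  have hedge : ∀ x : P.cutD.E, F (P.cutD.s x) = F (P.cutD.t x) :=
    fun x => hadj _ _ ⟨x, Or.inl ⟨rfl, rfl⟩⟩
  have hchain : ∀ (e : Γ.E) (i : ℕ) (h : i < P.num e + 1),
      F (Sum.inl (Γ.s e)) = F (P.cutD.t ⟨e, ⟨i, h⟩⟩) := by
    intro e i
    induction i with
    | zero =>
      intro h
      exact (congrArg F (hs0 e h)).symm.trans (hedge ⟨e, ⟨0, h⟩⟩)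
    | succ i ih =>
      intro h
      have h2 : i < P.num e := by omega
      calc F (Sum.inl (Γ.s e)) = F (P.cutD.t ⟨e, ⟨i, by omega⟩⟩) := ih _
        _ = F (Sum.inr ((⟨e, ⟨i, h2⟩⟩ : P.ι), false)) := congrArg F (hti e i (by omega) h2)
        _ = F (Sum.inr ((⟨e, ⟨i, h2⟩⟩ : P.ι), true)) := hglue _
        _ = F (P.cutD.s ⟨e, ⟨i + 1, h⟩⟩) := (congrArg F (hsi e i h h2)).symm
        _ = F (P.cutD.t ⟨e, ⟨i + 1, h⟩⟩) := hedge _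
  have hst : ∀ e : Γ.E, F (Sum.inl (Γ.s e)) = F (Sum.inl (Γ.t e)) := fun e =>
    (hchain e (P.num e) (by omega)).trans (congrArg F (htn e (by omega)))
  have hVadj : ∀ v w : Γ.V, Γ.adj v w → F (Sum.inl v) = F (Sum.inl w) := by
    rintro v w ⟨e, (⟨rfl, rfl⟩ | ⟨rfl, rfl⟩)⟩
    · exact hst e
    · exact (hst e).symm
  haveI hsub : Subsingleton Γ.Components := (Nat.card_eq_one_iff_unique.mp hconn).1
  have hVall : ∀ v w : Γ.V, F (Sum.inl v) = F (Sum.inl w) := by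
    intro v w
    have h0 : Γ.compOf v = Γ.compOf w := Subsingleton.elim _ _
    have h1 : Relation.EqvGen Γ.adj v w := Quotient.exact h0
    exact eqvGen_closure (R := fun v w => F (Sum.inl v) = F (Sum.inl w)) ⟨fun _ => rfl, Eq.symm, Eq.trans⟩ hVadj v w h1
  have key : ∀ (j : P.ι) (b : Bool), F (Sum.inr (j, b)) = F (Sum.inl (Γ.s j.1)) := by
    rintro ⟨e, i⟩ b
    have hf : F (Sum.inr ((⟨e, i⟩ : P.ι), false)) = F (Sum.inl (Γ.s e)) :=
      ((hchain e i.val (by omega)).trans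
        (congrArg F (hti e i.val (by omega) i.isLt))).symm
    cases b
    · exact hf
    · exact (hglue ⟨e, i⟩).symm.trans hf
  have hall : ∀ v w : P.cutD.V, F v = F w := by
    rintro (v | ⟨j, b⟩) (w | ⟨k, c⟩)
    · exact hVall v w
    · exact (hVall v _).trans (key k c).symm
    · exact (key j b).trans (hVall _ w)
    · exact (key j b).trans ((hVall _ _).trans (key k c).symm)
  haveI : Subsingleton (Quotient gs) := by
    constructor
    intro q1 q2
    obtain ⟨x1, rfl⟩ := Quotient.exists_rep q1
    obtain ⟨x2, rfl⟩ := Quotient.exists_rep q2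
    obtain ⟨v1, rfl⟩ := Quotient.exists_rep x1
    obtain ⟨v2, rfl⟩ := Quotient.exists_rep x2
    exact hall v1 v2
  have hcard1 : Nat.card (Quotient gs) ≤ 1 := by
    rcases isEmpty_or_nonempty (Quotient gs) with h | h
    · simp [Nat.card_of_isEmpty]
    · simp [Nat.card_unique]
  have hXc : P.cutD.numComponents = Nat.card X := rfl
  have hι := card_iota Γ P
  omega

/-- equations (7)–(8) of the paper.  Let `Γ` be a finite connected
metric graph with first Betti number `β_Γ`, let `f` be a function on `Γ` which is
nonzero on the vertices of `Γ` and has finitely many isolated zeros, all in the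
interiors of edges, recorded by the partition `P = P(f)` (hypothesis `hP`); let
`μ(f) = |P|` be the number of zeros, `ν(f)` the number of nodal domains, and
`β_{Γ\P}` the first Betti number of `Γ` cut at the points of `P`.  Then
`ν(f) = μ(f) + 1 - (β_Γ - β_{Γ\P})`; in particular
`μ(f) - β_Γ + 1 ≤ ν(f) ≤ μ(f) + 1`. -/
theorem nodal_count_formula (Γ : QuantumGraph) (hconn : Γ.Connected)
    (f : Γ.E → ℝ → ℝ) (P : Partition Γ) (hP : Γ.Corresponds f P) :
    (P.nodalCount : ℤ) = (P.size : ℤ) + 1 - (Γ.betti - P.cutD.betti) ∧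
    (P.size : ℤ) - Γ.betti + 1 ≤ (P.nodalCount : ℤ) ∧
    (P.nodalCount : ℤ) ≤ (P.size : ℤ) + 1 := by
  classical
  have hA := card_V_le_aux P.cutD
  have hB := cut_components_le Γ hconn P
  have hVc : Nat.card P.cutD.V = Nat.card Γ.V + 2 * P.size := by
    have h0 : Nat.card P.cutD.V = Nat.card (Γ.V ⊕ P.ι × Bool) := rfl
    rw [h0, Nat.card_sum, Nat.card_prod, card_iota]
    simp [Nat.card_eq_fintype_card]
    ring
  have hEc : Nat.card P.cutD.E = Nat.card Γ.E + P.size := by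
    have h0 : Nat.card P.cutD.E = Nat.card ((e : Γ.E) × Fin (P.num e + 1)) := rfl
    rw [h0]
    simp [Nat.card_eq_fintype_card, Partition.size, Finset.sum_add_distrib]
    ring
  have hc1 : Γ.numComponents = 1 := hconn
  have hb1 : Γ.betti = (Nat.card Γ.E : ℤ) - Nat.card Γ.V + 1 := by
    unfold QuantumGraph.betti
    rw [hc1]
    push_cast
    ring
  have hb2 : P.cutD.betti = ((Nat.card Γ.E : ℤ) + P.size) - ((Nat.card Γ.V : ℤ) + 2 * P.size)
      + P.cutD.numComponents := by
    unfold QuantumGraph.betti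
    rw [hVc, hEc]
    push_cast
    ring
  have hnc : P.nodalCount = P.cutD.numComponents := rfl
  rw [hnc, hb1, hb2]
  refine ⟨by omega, by omega, by omega⟩
end
end

section
/- Let T be a quantum tree graph with δ-type conditions at its vertices, with Dirichlet conditions not allowed at internal vertices. If an eigenvalue λ of T has an eigenfunction that is nonzero at all internal vertices of T, then λ is a simple eigenvalue. -/
/-!
# Quantum graphs, partitions and the energy functional

This file sets up a formalization of quantum graphs (finite metric graphs equipped with a
Schrödinger operator `f ↦ -f'' + q f` with bounded piecewise continuous potential and
extended δ-type vertex conditions), their eigenvalues (counted with multiplicity),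
partitions by interior points, the graphs obtained by cutting at a partition,
the energy functional `Λ`, equipartitions, and the Robin ("section point") cutting
construction underlying the map `Φ_m` of Band–Berkolaiko–Raz–Smilansky.
-/

open scoped Classical ENNReal Real
open Set

noncomputable section

open QuantumGraph

section AuxBBRS
open Matrix


/-- One-sided decrease from nonpositive right derivative on the open interval. -/
lemma auxDecr1 (f f' : ℝ → ℝ) {c d : ℝ} (hcd : c ≤ d) (hcont : ContinuousOn f (Icc c d))
    (hder : ∀ x ∈ Ioo c d, HasDerivWithinAt f (f' x) (Ici x) x)
    (hneg : ∀ x ∈ Ioo c d, f' x ≤ 0) : f d ≤ f c := by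
  rcases eq_or_lt_of_le hcd with h | h
  · rw [h]
  have key : ∀ u ∈ Ioo c d, f d ≤ f u := by
    intro u hu
    have h1 : ∀ x ∈ Icc u d, f x ≤ f u := by
      refine image_le_of_deriv_right_le_deriv_boundary (f' := f')
        (B := fun _ => f u) (B' := fun _ => 0)
        (hcont.mono (Icc_subset_Icc hu.1.le le_rfl)) ?_ le_rfl
        continuousOn_const (fun x _ => hasDerivWithinAt_const _ _ _) ?_
      · intro x hx
        exact hder x ⟨lt_of_lt_of_le hu.1 hx.1, hx.2⟩
      · intro x hx
        exact hneg x ⟨lt_of_lt_of_le hu.1 hx.1, hx.2⟩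
    exact h1 d ⟨hu.2.le, le_rfl⟩
  have hne : (nhdsWithin c (Ioo c d)).NeBot := left_nhdsWithin_Ioo_neBot h
  have htend : Filter.Tendsto f (nhdsWithin c (Ioo c d)) (nhds (f c)) := by
    have := (hcont c ⟨le_rfl, hcd⟩).tendsto
    exact this.mono_left (nhdsWithin_mono c Ioo_subset_Icc_self)
  exact ge_of_tendsto htend (Filter.eventually_of_mem self_mem_nhdsWithin key)

/-- One-sided decrease with a finite exceptional set, by induction on the number of
exceptional points in the interval. -/
lemma auxDecr2 (f f' : ℝ → ℝ) (S : Finset ℝ) :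
    ∀ (n : ℕ) (c d : ℝ), (S.filter (fun z => z ∈ Ioo c d)).card ≤ n → c ≤ d →
    ContinuousOn f (Icc c d) →
    (∀ x ∈ Ioo c d, x ∉ S → HasDerivWithinAt f (f' x) (Ici x) x) →
    (∀ x ∈ Ioo c d, x ∉ S → f' x ≤ 0) → f d ≤ f c := by
  intro n
  induction n with
  | zero =>
    intro c d hcard hcd hcont hder hneg
    have hemp : ∀ x ∈ Ioo c d, x ∉ S := by
      intro x hx hxS
      have : x ∈ S.filter (fun z => z ∈ Ioo c d) := Finset.mem_filter.2 ⟨hxS, hx⟩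
      rw [Finset.card_eq_zero.1 (Nat.le_zero.1 hcard)] at this
      exact absurd this (Finset.notMem_empty x)
    exact auxDecr1 f f' hcd hcont (fun x hx => hder x hx (hemp x hx))
      (fun x hx => hneg x hx (hemp x hx))
  | succ n ih =>
    intro c d hcard hcd hcont hder hneg
    by_cases hemp : (S.filter (fun z => z ∈ Ioo c d)) = ∅
    · have hemp' : ∀ x ∈ Ioo c d, x ∉ S := by
        intro x hx hxS
        have : x ∈ S.filter (fun z => z ∈ Ioo c d) := Finset.mem_filter.2 ⟨hxS, hx⟩
        rw [hemp] at this
        exact absurd this (Finset.notMem_empty x)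
      exact auxDecr1 f f' hcd hcont (fun x hx => hder x hx (hemp' x hx))
        (fun x hx => hneg x hx (hemp' x hx))
    · obtain ⟨p, hp⟩ := Finset.nonempty_iff_ne_empty.2 hemp
      obtain ⟨hpS, hpIoo⟩ := Finset.mem_filter.1 hp
      have hsub : ∀ c' d', Ioo c' d' ⊆ Ioo c d → p ∉ Ioo c' d' →
          (S.filter (fun z => z ∈ Ioo c' d')).card ≤ n := by
        intro c' d' hss hpn
        have : S.filter (fun z => z ∈ Ioo c' d') ⊆ (S.filter (fun z => z ∈ Ioo c d)).erase p := by
          intro z hz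
          obtain ⟨hz1, hz2⟩ := Finset.mem_filter.1 hz
          refine Finset.mem_erase.2 ⟨fun hzp => hpn (hzp ▸ hz2), Finset.mem_filter.2 ⟨hz1, hss hz2⟩⟩
        calc (S.filter (fun z => z ∈ Ioo c' d')).card
            ≤ ((S.filter (fun z => z ∈ Ioo c d)).erase p).card := Finset.card_le_card this
          _ ≤ n := by
              have := Finset.card_erase_of_mem hp
              omega
      have h1 : f p ≤ f c := by
        refine ih c p (hsub c p (fun z hz => ⟨hz.1, hz.2.trans hpIoo.2⟩) (by simp)) hpIoo.1.le
          (hcont.mono (Icc_subset_Icc le_rfl hpIoo.2.le)) ?_ ?_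
        · exact fun x hx hxS => hder x ⟨hx.1, hx.2.trans hpIoo.2⟩ hxS
        · exact fun x hx hxS => hneg x ⟨hx.1, hx.2.trans hpIoo.2⟩ hxS
      have h2 : f d ≤ f p := by
        refine ih p d (hsub p d (fun z hz => ⟨hpIoo.1.trans hz.1, hz.2⟩) (by simp)) hpIoo.2.le
          (hcont.mono (Icc_subset_Icc hpIoo.1.le le_rfl)) ?_ ?_
        · exact fun x hx hxS => hder x ⟨hpIoo.1.trans hx.1, hx.2⟩ hxS
        · exact fun x hx hxS => hneg x ⟨hpIoo.1.trans hx.1, hx.2⟩ hxS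
      exact h2.trans h1

/-- Convert a derivative within `Icc a b` at an interior-or-left point to a right
derivative within `Ici x`. -/
lemma auxConv {f : ℝ → ℝ} {d a b x : ℝ} (hx : x ∈ Ico a b)
    (h : HasDerivWithinAt f d (Icc a b) x) : HasDerivWithinAt f d (Ici x) x :=
  h.mono_of_mem_nhdsWithin (Icc_mem_nhdsGE_of_mem hx)

/-- Decrease statement in terms of derivatives within `Icc a b`. -/
lemma auxDecr (f f' : ℝ → ℝ) (S : Finset ℝ) {a b : ℝ} (hab : a ≤ b)
    (hcont : ContinuousOn f (Icc a b))
    (hder : ∀ x ∈ Icc a b, x ∉ S → HasDerivWithinAt f (f' x) (Icc a b) x)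
    (hneg : ∀ x ∈ Icc a b, x ∉ S → f' x ≤ 0) :
    ∀ x ∈ Icc a b, ∀ y ∈ Icc a b, x ≤ y → f y ≤ f x := by
  intro x hx y hy hxy
  refine auxDecr2 f f' S _ x y le_rfl hxy (hcont.mono (Icc_subset_Icc hx.1 hy.2)) ?_ ?_
  · intro z hz hzS
    have hz' : z ∈ Icc a b := ⟨hx.1.trans hz.1.le, hz.2.le.trans hy.2⟩
    exact auxConv ⟨hz'.1, lt_of_lt_of_le hz.2 hy.2⟩ (hder z hz' hzS)
  · intro z hz hzS
    exact hneg z ⟨hx.1.trans hz.1.le, hz.2.le.trans hy.2⟩ hzS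

/-- Constancy from zero derivative within `Icc` off a finite set. -/
lemma auxConst (W : ℝ → ℝ) (S : Finset ℝ) {a b : ℝ} (hab : a ≤ b)
    (hcont : ContinuousOn W (Icc a b))
    (hder : ∀ x ∈ Icc a b, x ∉ S → HasDerivWithinAt W 0 (Icc a b) x) :
    ∀ x ∈ Icc a b, W x = W a := by
  intro x hx
  have ha : a ∈ Icc a b := ⟨le_rfl, hab⟩
  have h1 : W x ≤ W a := auxDecr W (fun _ => 0) S hab hcont hder
    (fun _ _ _ => le_rfl) a ha x hx hx.1
  have h2 : W a ≤ W x := by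
    have := auxDecr (fun y => -W y) (fun _ => 0) S hab hcont.neg
      (fun z hz hzS => (hder z hz hzS).neg.congr_deriv neg_zero)
      (fun _ _ _ => le_rfl) a ha x hx hx.1
    simpa using this
  linarith

/-- Uniqueness for the second-order linear ODE with bounded coefficient, with the
equation holding off a finite set: a solution vanishing to first order at a point
vanishes identically. -/
lemma odeUnique {a b : ℝ} (Q : ℝ → ℝ) (M : ℝ) (hM : ∀ x ∈ Icc a b, |Q x| ≤ M)
    (S : Finset ℝ) (h h' : ℝ → ℝ)
    (hd : ∀ x ∈ Icc a b, HasDerivWithinAt h (h' x) (Icc a b) x)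
    (hc' : ContinuousOn h' (Icc a b))
    (hode : ∀ x ∈ Icc a b, x ∉ S → HasDerivWithinAt h' (Q x * h x) (Icc a b) x)
    {x0 : ℝ} (hx0 : x0 ∈ Icc a b) (h0 : h x0 = 0) (h0' : h' x0 = 0) :
    ∀ x ∈ Icc a b, h x = 0 := by
  set K : ℝ := M + 1 with hK
  have hch : ContinuousOn h (Icc a b) := fun x hx => (hd x hx).continuousWithinAt
  set r : ℝ → ℝ := fun y => h y * h y + h' y * h' y with hr
  have hrc : ContinuousOn r (Icc a b) := (hch.mul hch).add (hc'.mul hc')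
  set r' : ℝ → ℝ := fun y => 2 * h y * h' y + 2 * h' y * (Q y * h y) with hr'
  have hrd : ∀ y ∈ Icc a b, y ∉ S → HasDerivWithinAt r (r' y) (Icc a b) y := by
    intro y hy hyS
    have t1 := (hd y hy).mul (hd y hy)
    have t2 := (hode y hy hyS).mul (hode y hy hyS)
    have := t1.add t2
    exact this.congr_deriv (by simp only [hr']; ring)
  have hrnn : ∀ y, 0 ≤ r y := fun y => by
    show (0:ℝ) ≤ h y * h y + h' y * h' y
    nlinarith [mul_self_nonneg (h y), mul_self_nonneg (h' y)]
  have hrx0 : r x0 = 0 := by simp [hr, h0, h0']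
  have hbound : ∀ y ∈ Icc a b, |r' y| ≤ K * r y := by
    intro y hy
    have h1 : |2 * h y * h' y| ≤ r y := by
      rw [abs_le]
      constructor
      · show -(h y * h y + h' y * h' y) ≤ 2 * h y * h' y
        nlinarith [sq_nonneg (h y + h' y)]
      · show 2 * h y * h' y ≤ h y * h y + h' y * h' y
        nlinarith [sq_nonneg (h y - h' y)]
    have h2 : |2 * h' y * (Q y * h y)| ≤ M * r y := by
      have : |2 * h' y * (Q y * h y)| = |Q y| * |2 * h y * h' y| := by
        rw [← abs_mul]; ring_nf
      rw [this]
      have hQ := hM y hy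
      have hQ0 : (0 : ℝ) ≤ |Q y| := abs_nonneg _
      calc |Q y| * |2 * h y * h' y| ≤ M * |2 * h y * h' y| :=
            mul_le_mul_of_nonneg_right hQ (abs_nonneg _)
        _ ≤ M * r y := by
            have hM0 : 0 ≤ M := le_trans hQ0 hQ
            exact mul_le_mul_of_nonneg_left h1 hM0
    calc |r' y| ≤ |2 * h y * h' y| + |2 * h' y * (Q y * h y)| := abs_add_le _ _
      _ ≤ r y + M * r y := add_le_add h1 h2
      _ = K * r y := by rw [hK]; ring
  have hrzero : ∀ x ∈ Icc a b, r x ≤ 0 := by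
    intro x hx
    rcases le_total x0 x with hle | hle
    · -- right branch
      set G : ℝ → ℝ := fun y => r y * Real.exp (-K * y) with hG
      set G' : ℝ → ℝ := fun y => (r' y - K * r y) * Real.exp (-K * y) with hG'
      have hGd : ∀ y ∈ Icc a b, y ∉ S → HasDerivWithinAt G (G' y) (Icc a b) y := by
        intro y hy hyS
        have e1 : HasDerivAt (fun y : ℝ => -K * y) (-K) y := by
          simpa using (hasDerivAt_id y).const_mul (-K)
        have e2 : HasDerivAt (fun y : ℝ => Real.exp (-K * y))
            (Real.exp (-K * y) * (-K)) y := (Real.hasDerivAt_exp (-K * y)).comp y e1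
        have := (hrd y hy hyS).mul e2.hasDerivWithinAt
        exact this.congr_deriv (by simp only [hG']; ring)
      have hGc : ContinuousOn G (Icc a b) :=
        hrc.mul ((Real.continuous_exp.comp (continuous_const.mul continuous_id)).continuousOn)
      have hGneg : ∀ y ∈ Icc a b, y ∉ S → G' y ≤ 0 := by
        intro y hy _
        have := (abs_le.1 (hbound y hy)).2
        have hexp : (0:ℝ) < Real.exp (-K * y) := Real.exp_pos _
        have : r' y - K * r y ≤ 0 := by linarith
        exact mul_nonpos_of_nonpos_of_nonneg this hexp.le
      have := auxDecr G G' S (hx0.1.trans hx0.2) hGc hGd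
        (fun y hy hyS => hGneg y hy hyS) x0 hx0 x hx hle
      have hGx0 : G x0 = 0 := by simp [hG, hrx0]
      rw [hGx0] at this
      have hexp : (0:ℝ) < Real.exp (-K * x) := Real.exp_pos _
      simp only [hG] at this
      by_contra hpos
      push_neg at hpos
      nlinarith [mul_pos hpos hexp]
    · -- left branch
      set G : ℝ → ℝ := fun y => -(r y * Real.exp (K * y)) with hG
      set G' : ℝ → ℝ := fun y => -((r' y + K * r y) * Real.exp (K * y)) with hG'
      have hGd : ∀ y ∈ Icc a b, y ∉ S → HasDerivWithinAt G (G' y) (Icc a b) y := by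
        intro y hy hyS
        have e1 : HasDerivAt (fun y : ℝ => K * y) K y := by
          simpa using (hasDerivAt_id y).const_mul K
        have e2 : HasDerivAt (fun y : ℝ => Real.exp (K * y))
            (Real.exp (K * y) * K) y := (Real.hasDerivAt_exp (K * y)).comp y e1
        have := ((hrd y hy hyS).mul e2.hasDerivWithinAt).neg
        exact this.congr_deriv (by simp only [hG']; ring)
      have hGc : ContinuousOn G (Icc a b) :=
        (hrc.mul ((Real.continuous_exp.comp (continuous_const.mul continuous_id)).continuousOn)).neg
      have hGneg : ∀ y ∈ Icc a b, y ∉ S → G' y ≤ 0 := by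
        intro y hy _
        have := (abs_le.1 (hbound y hy)).1
        have hexp : (0:ℝ) < Real.exp (K * y) := Real.exp_pos _
        have h3 : 0 ≤ r' y + K * r y := by linarith
        simp only [hG']
        exact neg_nonpos_of_nonneg (mul_nonneg h3 hexp.le)
      have := auxDecr G G' S (hx0.1.trans hx0.2) hGc hGd
        (fun y hy hyS => hGneg y hy hyS) x hx x0 hx0 hle
      have hGx0 : G x0 = 0 := by simp [hG, hrx0]
      rw [hGx0] at this
      have hexp : (0:ℝ) < Real.exp (K * x) := Real.exp_pos _
      simp only [hG] at this
      by_contra hpos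
      push_neg at hpos
      nlinarith [mul_pos hpos hexp]
  intro x hx
  have h1 := hrzero x hx
  have h2 := hrnn x
  have h3 : r x = 0 := le_antisymm h1 h2
  have h4 : h x * h x + h' x * h' x = 0 := h3
  have h5 : h x * h x = 0 := by
    nlinarith [mul_self_nonneg (h x), mul_self_nonneg (h' x)]
  exact mul_self_eq_zero.mp h5


/-- On a connected graph with `|V| = |E| + 1` (a tree), a divergence-free edge flow
vanishes. -/
lemma flowEqZero {V E : Type} [Fintype V] [Fintype E] (s t : E → V)
    (hcard : Fintype.card V = Fintype.card E + 1)
    (hconn : ∀ v w : V,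
      Relation.EqvGen (fun v w => ∃ e, (s e = v ∧ t e = w) ∨ (s e = w ∧ t e = v)) v w)
    (v0 : V) (w : E → ℝ)
    (hdiv : ∀ v, ∑ e : E, ((if s e = v then w e else 0) - (if t e = v then w e else 0)) = 0) :
    ∀ e, w e = 0 := by
  classical
  set M : Matrix V E ℝ := fun v e => (if s e = v then (1:ℝ) else 0) - (if t e = v then 1 else 0)
    with hM
  -- w lies in the kernel of M
  have hker : M.mulVec w = 0 := by
    funext v
    simp only [Matrix.mulVec, dotProduct, Pi.zero_apply, hM]
    calc ∑ e : E, ((if s e = v then (1:ℝ) else 0) - (if t e = v then 1 else 0)) * w e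
        = ∑ e : E, ((if s e = v then w e else 0) - (if t e = v then w e else 0)) :=
          Finset.sum_congr rfl (fun e _ => by split_ifs <;> ring)
      _ = 0 := hdiv v
  -- the transpose acts as φ ↦ (φ (s e) - φ (t e))
  have hT : ∀ (φ : V → ℝ) (e : E), Mᵀ.mulVec φ e = φ (s e) - φ (t e) := by
    intro φ e
    simp only [Matrix.mulVec, dotProduct, Matrix.transpose_apply, hM]
    rw [Finset.sum_congr rfl (fun v _ => by
      show ((if s e = v then (1:ℝ) else 0) - (if t e = v then 1 else 0)) * φ v
        = (if s e = v then φ v else 0) - (if t e = v then φ v else 0)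
      split_ifs <;> ring)]
    rw [Finset.sum_sub_distrib, Finset.sum_ite_eq, Finset.sum_ite_eq]
    simp
  -- kernel of the transpose is the constants
  set C : ℝ →ₗ[ℝ] (V → ℝ) := LinearMap.pi (fun _ => LinearMap.id) with hC
  have hkerT : LinearMap.ker (Matrix.mulVecLin Mᵀ) = LinearMap.range C := by
    ext φ
    constructor
    · intro hφ
      have hφ' : ∀ e, φ (s e) = φ (t e) := by
        intro e
        have : Mᵀ.mulVec φ e = 0 := by
          have := LinearMap.mem_ker.1 hφ
          rw [Matrix.mulVecLin_apply] at this
          exact congrFun this e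
        rw [hT] at this
        linarith
      have hcst : ∀ v u : V, φ v = φ u := by
        intro v u
        induction hconn v u with
        | rel a b hab => obtain ⟨e, he⟩ := hab
                         rcases he with ⟨h1, h2⟩ | ⟨h1, h2⟩
                         · rw [← h1, ← h2]; exact hφ' e
                         · rw [← h1, ← h2]; exact (hφ' e).symm
        | refl a => rfl
        | symm a b _ ih => exact ih.symm
        | trans a b c _ _ ih1 ih2 => exact ih1.trans ih2
      exact ⟨φ v0, funext fun v => hcst v0 v⟩
    · rintro ⟨c, rfl⟩
      apply LinearMap.mem_ker.2
      funext e
      rw [Matrix.mulVecLin_apply, hT]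
      simp [hC]
  have hCinj : Function.Injective C := by
    intro c c' hcc
    have := congrFun hcc v0
    simpa [hC] using this
  have hrk1 : Module.finrank ℝ (LinearMap.range C) = 1 := by
    rw [LinearMap.finrank_range_of_inj hCinj, Module.finrank_self]
  have hrnT := LinearMap.finrank_range_add_finrank_ker (Matrix.mulVecLin Mᵀ)
  rw [hkerT, hrk1, Module.finrank_fintype_fun_eq_card] at hrnT
  have hrankT : Mᵀ.rank = Fintype.card V - 1 := by
    rw [Matrix.rank]
    omega
  have hrank : M.rank = Fintype.card E := by
    rw [← Matrix.rank_transpose, hrankT]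
    omega
  have hrn := LinearMap.finrank_range_add_finrank_ker (Matrix.mulVecLin M)
  rw [Module.finrank_fintype_fun_eq_card] at hrn
  have hker0 : Module.finrank ℝ (LinearMap.ker (Matrix.mulVecLin M)) = 0 := by
    have : Module.finrank ℝ (LinearMap.range (Matrix.mulVecLin M)) = M.rank := rfl
    omega
  have hbot : LinearMap.ker (Matrix.mulVecLin M) = ⊥ := Submodule.finrank_eq_zero.mp hker0
  have hwker : w ∈ LinearMap.ker (Matrix.mulVecLin M) := by
    apply LinearMap.mem_ker.2
    rw [Matrix.mulVecLin_apply]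
    exact hker
  rw [hbot] at hwker
  intro e
  exact congrFun (Submodule.mem_bot ℝ |>.1 hwker) e

end AuxBBRS


/-- Proposition 1 of the paper.  Let `T` be a quantum tree graph
(finite, connected, first Betti number `0`) with δ-type conditions at its vertices, with
Dirichlet conditions not allowed at internal vertices (vertices of degree at least 2).
If an eigenvalue `lam` of `T` has an eigenfunction that is nonzero at all internal
vertices of `T`, then `lam` is a simple eigenvalue. -/
theorem tree_nonvanishing_implies_simple (T : QuantumGraph) (hconn : T.Connected)
    (htree : T.betti = 0)
    (hdir : ∀ v : T.V, 2 ≤ T.degree v → T.α v ≠ none)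
    (lam : ℝ) (f : T.E → ℝ → ℝ) (hf : T.IsEigenfun lam f)
    (hnz : ∀ a : T.E × Bool, 2 ≤ T.degree (T.endV a) → T.endVal f a ≠ 0) :
    T.eigMult lam = 1 := by
  classical
  obtain ⟨f', hfp⟩ := hf
  obtain ⟨e₀, x₀, hx₀, hfx₀⟩ := hfp.nontrivial
  have hfne : f ≠ 0 := fun h0 => hfx₀ (by rw [h0]; rfl)
  -- connectivity in `EqvGen` form
  have hconn' : ∀ v w : T.V, Relation.EqvGen T.adj v w := by
    intro v w
    have h1 : Nat.card T.Components = 1 := hconn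
    rw [Nat.card_eq_one_iff_unique] at h1
    have := h1.1
    have h2 : T.compOf v = T.compOf w := Subsingleton.elim _ _
    exact Quotient.exact h2
  -- cardinality of vertices
  have hcard : Fintype.card T.V = Fintype.card T.E + 1 := by
    have hb := htree
    rw [QuantumGraph.betti, hconn] at hb
    rw [Nat.card_eq_fintype_card, Nat.card_eq_fintype_card] at hb
    omega
  -- degree as a cardinality
  have hdegcard : ∀ v, T.degree v
      = (Finset.univ.filter (fun a : T.E × Bool => T.endV a = v)).card := by
    intro v
    rw [QuantumGraph.degree, Finset.card_filter]
  -- two distinct ends at a vertex force degree at least two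
  have hdeg2 : ∀ (a a' : T.E × Bool), a ≠ a' → T.endV a = T.endV a' →
      2 ≤ T.degree (T.endV a) := by
    intro a a' hne hv
    rw [hdegcard]
    have hsub : ({a, a'} : Finset (T.E × Bool)) ⊆
        Finset.univ.filter (fun x => T.endV x = T.endV a) := by
      intro x hx
      rcases Finset.mem_insert.1 hx with h | h
      · subst h; exact Finset.mem_filter.2 ⟨Finset.mem_univ _, rfl⟩
      · rw [Finset.mem_singleton] at h; subst h
        exact Finset.mem_filter.2 ⟨Finset.mem_univ _, hv.symm⟩
    calc 2 = ({a, a'} : Finset (T.E × Bool)).card := (Finset.card_pair hne).symm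
      _ ≤ _ := Finset.card_le_card hsub
  -- degree at most one forces all ends at the vertex to coincide
  have hdeg1 : ∀ v, ¬ (2 ≤ T.degree v) → ∀ a a' : T.E × Bool,
      T.endV a = v → T.endV a' = v → a = a' := by
    intro v hv a a' ha ha'
    by_contra hne
    exact hv (ha ▸ hdeg2 a a' hne (ha.trans ha'.symm))
  have hadjsymm : ∀ v u, T.adj v u → T.adj u v := by
    rintro v u ⟨e, h⟩
    exact ⟨e, h.symm⟩
  -- on each edge, `f` is nonzero somewhere
  have hnzpt : ∀ e, ∃ zz ∈ Icc (0:ℝ) (T.L e), f e zz ≠ 0 := by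
    intro e
    by_cases hds : 2 ≤ T.degree (T.s e)
    · exact ⟨0, ⟨le_rfl, (T.L_pos e).le⟩,
        hnz (e, false) (show 2 ≤ T.degree (T.endV (e, false)) from hds)⟩
    by_cases hdt : 2 ≤ T.degree (T.t e)
    · exact ⟨T.L e, ⟨(T.L_pos e).le, le_rfl⟩,
        hnz (e, true) (show 2 ≤ T.degree (T.endV (e, true)) from hdt)⟩
    -- both endpoints have degree one: the graph is the single edge `e`
    have hone_s : ∀ a : T.E × Bool, T.endV a = T.s e → a = (e, false) := fun a ha =>
      hdeg1 (T.s e) hds a (e, false) ha rfl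
    have hone_t : ∀ a : T.E × Bool, T.endV a = T.t e → a = (e, true) := fun a ha =>
      hdeg1 (T.t e) hdt a (e, true) ha rfl
    have hstep' : ∀ v u, T.adj v u → (v = T.s e ∨ v = T.t e) → (u = T.s e ∨ u = T.t e) := by
      rintro v u ⟨e1, h1⟩ hv
      rcases h1 with ⟨hs, ht⟩ | ⟨hs, ht⟩
      · rcases hv with hv | hv
        · have h2 := hone_s (e1, false) (by rw [show T.endV (e1, false) = T.s e1 from rfl, hs, hv])
          have he1 : e1 = e := congrArg Prod.fst h2
          right; rw [← ht, he1]
        · have h2 := hone_t (e1, false) (by rw [show T.endV (e1, false) = T.s e1 from rfl, hs, hv])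
          exact absurd h2 (by simp)
      · rcases hv with hv | hv
        · have h2 := hone_s (e1, true) (by rw [show T.endV (e1, true) = T.t e1 from rfl, ht, hv])
          exact absurd h2 (by simp)
        · have h2 := hone_t (e1, true) (by rw [show T.endV (e1, true) = T.t e1 from rfl, ht, hv])
          have he1 : e1 = e := congrArg Prod.fst h2
          left; rw [← hs, he1]
    have hinv' : ∀ v u, Relation.EqvGen T.adj v u →
        ((v = T.s e ∨ v = T.t e) ↔ (u = T.s e ∨ u = T.t e)) := by
      intro v u h
      induction h with
      | rel v u h => exact ⟨hstep' v u h, hstep' u v (hadjsymm v u h)⟩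
      | refl v => exact Iff.rfl
      | symm v u _ ih => exact ih.symm
      | trans v u w _ _ ih1 ih2 => exact ih1.trans ih2
    have hU0 : T.s e₀ = T.s e ∨ T.s e₀ = T.t e :=
      (hinv' (T.s e) (T.s e₀) (hconn' _ _)).1 (Or.inl rfl)
    have he0 : e₀ = e := by
      rcases hU0 with h | h
      · have h2 := hone_s (e₀, false) (by rw [show T.endV (e₀, false) = T.s e₀ from rfl, h])
        exact congrArg Prod.fst h2
      · have h2 := hone_t (e₀, false) (by rw [show T.endV (e₀, false) = T.s e₀ from rfl, h])
        exact absurd h2 (by simp)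
    exact ⟨x₀, by rw [← he0]; exact hx₀, by rw [← he0]; exact hfx₀⟩
  choose z hz hfz using hnzpt
  -- MAIN CLAIM: every eigenfunction is a multiple of f
  have main : ∀ g : T.E → ℝ → ℝ, T.IsEigenfun lam g → ∃ c : ℝ, g = c • f := by
    rintro g ⟨g', hgp⟩
    choose Sf hSf using hfp.ode
    choose Sg hSg using hgp.ode
    set w : T.E → ℝ := fun e => f e 0 * g' e 0 - f' e 0 * g e 0 with hwdef
    have hw0 : ∀ e, w e = f e 0 * g' e 0 - f' e 0 * g e 0 := fun _ => rfl
    -- the Wronskian is constant on each edge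
    have hWconst : ∀ e, ∀ x ∈ Icc (0:ℝ) (T.L e),
        f e x * g' e x - f' e x * g e x = w e := by
      intro e x hx
      have hfc : ContinuousOn (f e) (Icc 0 (T.L e)) :=
        fun y hy => (hfp.hasDeriv e y hy).continuousWithinAt
      have hgc : ContinuousOn (g e) (Icc 0 (T.L e)) :=
        fun y hy => (hgp.hasDeriv e y hy).continuousWithinAt
      have hcont : ContinuousOn (fun y => f e y * g' e y - f' e y * g e y)
          (Icc 0 (T.L e)) :=
        (hfc.mul (hgp.contDeriv e)).sub ((hfp.contDeriv e).mul hgc)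
      have hder : ∀ y ∈ Icc (0:ℝ) (T.L e), y ∉ Sf e ∪ Sg e →
          HasDerivWithinAt (fun y => f e y * g' e y - f' e y * g e y) 0
            (Icc 0 (T.L e)) y := by
        intro y hy hyS
        have hf1 := hSf e y ⟨hy, fun hc => hyS (Finset.mem_union_left _ (Finset.mem_coe.1 hc))⟩
        have hg1 := hSg e y ⟨hy, fun hc => hyS (Finset.mem_union_right _ (Finset.mem_coe.1 hc))⟩
        have hd := ((hfp.hasDeriv e y hy).mul hg1).sub (hf1.mul (hgp.hasDeriv e y hy))
        exact hd.congr_deriv (by ring)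
      exact auxConst _ (Sf e ∪ Sg e) (T.L_pos e).le hcont hder x hx
    -- the Wronskian constants form a divergence-free flow
    have hdiv : ∀ v, ∑ e : T.E,
        ((if T.s e = v then w e else 0) - (if T.t e = v then w e else 0)) = 0 := by
      intro v
      have hsum0 : ∑ a : T.E × Bool, (if T.endV a = v then
          T.endVal f a * T.endDeriv g' a - T.endDeriv f' a * T.endVal g a else 0) = 0 := by
        cases hα : T.α v with
        | none =>
          apply Finset.sum_eq_zero
          intro a _
          by_cases h : T.endV a = v
          · rw [if_pos h, hfp.dirich v a hα h, hgp.dirich v a hα h]; ring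
          · rw [if_neg h]
        | some cv =>
          by_cases hex : ∃ a0 : T.E × Bool, T.endV a0 = v
          · obtain ⟨a0, ha0⟩ := hex
            have h1 : ∑ a : T.E × Bool, (if T.endV a = v then
                T.endVal f a * T.endDeriv g' a - T.endDeriv f' a * T.endVal g a else 0)
                = T.endVal f a0 * T.derivSumAt g' v - T.endVal g a0 * T.derivSumAt f' v := by
              rw [QuantumGraph.derivSumAt, QuantumGraph.derivSumAt, Finset.mul_sum,
                Finset.mul_sum, ← Finset.sum_sub_distrib]
              apply Finset.sum_congr rfl
              intro a _
              by_cases h : T.endV a = v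
              · rw [if_pos h, if_pos h, if_pos h,
                  hfp.contVert a a0 (by rw [h, ha0]), hgp.contVert a a0 (by rw [h, ha0])]
                ring
              · rw [if_neg h, if_neg h, if_neg h]; ring
            rw [h1, hfp.delta v cv a0 hα ha0, hgp.delta v cv a0 hα ha0]
            ring
          · apply Finset.sum_eq_zero
            intro a _
            rw [if_neg (fun h => hex ⟨a, h⟩)]
      have hsplit : ∑ a : T.E × Bool, (if T.endV a = v then
          T.endVal f a * T.endDeriv g' a - T.endDeriv f' a * T.endVal g a else 0)
          = ∑ e : T.E, ((if T.s e = v then w e else 0) - (if T.t e = v then w e else 0)) := by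
        rw [Fintype.sum_prod_type]
        apply Finset.sum_congr rfl
        intro e _
        rw [Fintype.sum_bool]
        have hWL : f e (T.L e) * g' e (T.L e) - f' e (T.L e) * g e (T.L e) = w e :=
          hWconst e (T.L e) ⟨(T.L_pos e).le, le_rfl⟩
        show (if T.t e = v then
            f e (T.L e) * -(g' e (T.L e)) - -(f' e (T.L e)) * g e (T.L e) else 0)
          + (if T.s e = v then f e 0 * g' e 0 - f' e 0 * g e 0 else 0)
          = (if T.s e = v then w e else 0) - (if T.t e = v then w e else 0)
        split_ifs with hB hA hA
        · linear_combination -hw0 e - hWL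
        · linear_combination -hWL
        · linear_combination -hw0 e
        · ring
      calc ∑ e : T.E, ((if T.s e = v then w e else 0) - (if T.t e = v then w e else 0))
          = ∑ a : T.E × Bool, (if T.endV a = v then
            T.endVal f a * T.endDeriv g' a - T.endDeriv f' a * T.endVal g a else 0) :=
            hsplit.symm
        _ = 0 := hsum0
    have hwzero : ∀ e, w e = 0 := by
      refine flowEqZero T.s T.t hcard ?_ (T.s e₀) w hdiv
      intro v u
      exact hconn' v u
    have hWzero : ∀ e, ∀ x ∈ Icc (0:ℝ) (T.L e),
        f e x * g' e x - f' e x * g e x = 0 := fun e x hx =>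
      (hWconst e x hx).trans (hwzero e)
    -- per-edge proportionality
    set cE : T.E → ℝ := fun e => g e (z e) / f e (z e) with hcEdef
    have hprop : ∀ e, ∀ x ∈ Icc (0:ℝ) (T.L e), g e x = cE e * f e x := by
      intro e
      obtain ⟨Mq, hMq⟩ := T.q_bdd e
      have hbd : ∀ x ∈ Icc (0:ℝ) (T.L e), |T.q e x - lam| ≤ Mq + |lam| := by
        intro x hx
        calc |T.q e x - lam| ≤ |T.q e x| + |lam| := abs_sub (T.q e x) lam
          _ ≤ Mq + |lam| := add_le_add (hMq x hx) le_rfl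
      have hd : ∀ y ∈ Icc (0:ℝ) (T.L e),
          HasDerivWithinAt (fun y => g e y - cE e * f e y)
            (g' e y - cE e * f' e y) (Icc 0 (T.L e)) y := by
        intro y hy
        exact (hgp.hasDeriv e y hy).sub ((hfp.hasDeriv e y hy).const_mul (cE e))
      have hc' : ContinuousOn (fun y => g' e y - cE e * f' e y) (Icc (0:ℝ) (T.L e)) :=
        (hgp.contDeriv e).sub (continuousOn_const.mul (hfp.contDeriv e))
      have hode : ∀ y ∈ Icc (0:ℝ) (T.L e), y ∉ Sf e ∪ Sg e →
          HasDerivWithinAt (fun y => g' e y - cE e * f' e y)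
            ((T.q e y - lam) * (g e y - cE e * f e y)) (Icc 0 (T.L e)) y := by
        intro y hy hyS
        have hf1 := hSf e y ⟨hy, fun hc => hyS (Finset.mem_union_left _ (Finset.mem_coe.1 hc))⟩
        have hg1 := hSg e y ⟨hy, fun hc => hyS (Finset.mem_union_right _ (Finset.mem_coe.1 hc))⟩
        have hd2 := hg1.sub (hf1.const_mul (cE e))
        exact hd2.congr_deriv (by ring)
      have h0 : g e (z e) - cE e * f e (z e) = 0 := by
        rw [hcEdef]
        show g e (z e) - g e (z e) / f e (z e) * f e (z e) = 0
        rw [div_mul_cancel₀ _ (hfz e), sub_self]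
      have h0' : g' e (z e) - cE e * f' e (z e) = 0 := by
        have hW := hWzero e (z e) (hz e)
        rw [hcEdef]
        show g' e (z e) - g e (z e) / f e (z e) * f' e (z e) = 0
        rw [sub_eq_zero, div_mul_eq_mul_div, eq_comm, div_eq_iff (hfz e)]
        linear_combination -hW
      have huniq := odeUnique (fun x => T.q e x - lam) (Mq + |lam|) hbd
        (Sf e ∪ Sg e) (fun y => g e y - cE e * f e y) (fun y => g' e y - cE e * f' e y)
        hd hc' hode (hz e) h0 h0'
      intro x hx
      have := huniq x hx
      linarith
    -- the constants from end values
    have hcend : ∀ a : T.E × Bool, cE a.1 * T.endVal f a = T.endVal g a := by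
      rintro ⟨e, b⟩
      cases b
      · exact (hprop e 0 ⟨le_rfl, (T.L_pos e).le⟩).symm
      · exact (hprop e (T.L e) ⟨(T.L_pos e).le, le_rfl⟩).symm
    -- edges sharing a vertex have the same constant
    have hshare : ∀ a a' : T.E × Bool, T.endV a = T.endV a' → cE a.1 = cE a'.1 := by
      intro a a' hv
      by_cases he : a.1 = a'.1
      · rw [he]
      · have hne : a ≠ a' := fun h => he (by rw [h])
        have hdeg : 2 ≤ T.degree (T.endV a) := hdeg2 a a' hne hv
        have hfa := hnz a hdeg
        have e1 := hcend a
        have e2 := hcend a'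
        have e3 : T.endVal f a = T.endVal f a' := hfp.contVert a a' hv
        have e4 : T.endVal g a = T.endVal g a' := hgp.contVert a a' hv
        apply mul_right_cancel₀ hfa
        rw [e1, e3, e2, e4]
    -- all constants are equal, by connectivity
    have hstep : ∀ v u : T.V, T.adj v u →
        (∀ a : T.E × Bool, T.endV a = v → cE a.1 = cE e₀) →
        (∀ a : T.E × Bool, T.endV a = u → cE a.1 = cE e₀) := by
      rintro v u ⟨e1, h1⟩ hU a ha
      rcases h1 with ⟨hs, ht⟩ | ⟨hs, ht⟩
      · have h2 : cE a.1 = cE e1 :=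
          hshare a (e1, true) (by rw [ha, show T.endV (e1, true) = T.t e1 from rfl, ht])
        have h3 : cE e1 = cE e₀ :=
          hU (e1, false) (by rw [show T.endV (e1, false) = T.s e1 from rfl, hs])
        rw [h2, h3]
      · have h2 : cE a.1 = cE e1 :=
          hshare a (e1, false) (by rw [ha, show T.endV (e1, false) = T.s e1 from rfl, hs])
        have h3 : cE e1 = cE e₀ :=
          hU (e1, true) (by rw [show T.endV (e1, true) = T.t e1 from rfl, ht])
        rw [h2, h3]
    have hinv : ∀ v u, Relation.EqvGen T.adj v u →
        ((∀ a : T.E × Bool, T.endV a = v → cE a.1 = cE e₀) ↔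
         (∀ a : T.E × Bool, T.endV a = u → cE a.1 = cE e₀)) := by
      intro v u h
      induction h with
      | rel v u h => exact ⟨hstep v u h, hstep u v (hadjsymm v u h)⟩
      | refl v => exact Iff.rfl
      | symm v u _ ih => exact ih.symm
      | trans v u w _ _ ih1 ih2 => exact ih1.trans ih2
    have hbase : ∀ a : T.E × Bool, T.endV a = T.s e₀ → cE a.1 = cE e₀ := by
      intro a ha
      exact hshare a (e₀, false) (by rw [ha, show T.endV (e₀, false) = T.s e₀ from rfl])
    have hallc : ∀ e, cE e = cE e₀ := by
      intro e
      have hU := (hinv (T.s e₀) (T.s e) (hconn' _ _)).1 hbase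
      exact hU (e, false) rfl
    refine ⟨cE e₀, ?_⟩
    funext e xx
    simp only [Pi.smul_apply, smul_eq_mul]
    by_cases hx : xx ∈ Icc (0:ℝ) (T.L e)
    · rw [← hallc e]
      exact hprop e xx hx
    · rw [hfp.support e xx hx, hgp.support e xx hx]
      ring
  -- conclude: the span of the eigenfunctions is the line through f
  have hspan : Submodule.span ℝ {g : T.E → ℝ → ℝ | T.IsEigenfun lam g}
      = Submodule.span ℝ {f} := by
    apply le_antisymm
    · rw [Submodule.span_le]
      intro g hg
      obtain ⟨c, rfl⟩ := main g hg
      exact SetLike.mem_coe.2 (Submodule.mem_span_singleton.2 ⟨c, rfl⟩)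
    · exact Submodule.span_mono (Set.singleton_subset_iff.2 ⟨f', hfp⟩)
  have hfinal : T.eigMult lam
      = Module.finrank ℝ (Submodule.span ℝ {g : T.E → ℝ → ℝ | T.IsEigenfun lam g}) := rfl
  rw [hfinal, hspan]
  exact finrank_span_singleton hfne
end
end
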